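/- Conversely, let $\bm a$ be a tuple of positive reals and suppose there exist positive integers $r_1,\dots,r_n$ with $r_1a_1=\dots=r_na_n$ and $k=r_1+\dots+r_n-n+1$. Then $\bm a$ is a local maximizer of the function $\bm b\mapsto c_k(E(\bm b))/(b_1\cdots b_n)^{1/n}$, where $c_k(E(\bm b))$ is the $k$-th smallest positive integer multiple (with multiplicity) of the entries of $\bm b$. -/

import Mathlib

private def pairF {n : ℕ} (s : Fin n → ℕ) : Finset (ℕ × Fin n) :=
  Finset.univ.biUnion fun j : Fin n => (Finset.Icc 1 (s j)).image fun m => (m, j)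

private lemma pairSet_eq {n : ℕ} (s : Fin n → ℕ) :
    {p : ℕ × Fin n | 1 ≤ p.1 ∧ p.1 ≤ s p.2} = ↑(pairF s) := by
  ext ⟨m, j⟩
  simp only [Set.mem_setOf_eq, pairF, Finset.coe_biUnion, Finset.coe_univ, Set.mem_univ,
    Set.iUnion_true, Set.mem_iUnion, Finset.mem_coe, Finset.mem_image, Finset.mem_Icc,
    Prod.mk.injEq]
  constructor
  · rintro ⟨h1, h2⟩
    exact ⟨j, m, ⟨h1, h2⟩, rfl, rfl⟩
  · rintro ⟨j', m', ⟨h1, h2⟩, rfl, rfl⟩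
    exact ⟨h1, h2⟩

private lemma pairF_card {n : ℕ} (s : Fin n → ℕ) : (pairF s).card = ∑ j, s j := by
  rw [pairF, Finset.card_biUnion]
  · exact Finset.sum_congr rfl fun j _ => by
      rw [Finset.card_image_of_injective _ (fun a b h => by simpa using congrArg Prod.fst h)]
      simp
  · intro i _ j _ hij
    simp only [Finset.disjoint_left, Finset.mem_image, Finset.mem_Icc]
    rintro p ⟨m, _, rfl⟩ ⟨m', _, h⟩
    have h2 := congrArg Prod.snd h
    simp only at h2
    exact hij h2.symm

private lemma pairSet_ncard {n : ℕ} (s : Fin n → ℕ) :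
    {p : ℕ × Fin n | 1 ≤ p.1 ∧ p.1 ≤ s p.2}.ncard = ∑ j, s j := by
  rw [pairSet_eq, Set.ncard_coe_finset, pairF_card]

private lemma pairSet_finite {n : ℕ} (s : Fin n → ℕ) :
    {p : ℕ × Fin n | 1 ≤ p.1 ∧ p.1 ≤ s p.2}.Finite := by
  rw [pairSet_eq]; exact Finset.finite_toSet _

private lemma S_fin {n : ℕ} (hn : 0 < n) {b : Fin n → ℝ} (hb : ∀ j, 0 < b j) (c : ℝ) :
    {p : ℕ × Fin n | 1 ≤ p.1 ∧ (p.1 : ℝ) * b p.2 ≤ c}.Finite := by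
  have hne : (Finset.univ : Finset (Fin n)).Nonempty := ⟨⟨0, hn⟩, Finset.mem_univ _⟩
  set β := Finset.univ.inf' hne b with hβ
  have hβpos : 0 < β := (Finset.lt_inf'_iff hne).mpr fun j _ => hb j
  have hβle : ∀ j, β ≤ b j := fun j => Finset.inf'_le _ (Finset.mem_univ j)
  apply Set.Finite.subset ((Set.finite_Iic (⌊c / β⌋₊)).prod Set.finite_univ)
  rintro ⟨m, j⟩ ⟨hm, hmc⟩
  refine ⟨Set.mem_Iic.mpr (Nat.le_floor ?_), Set.mem_univ _⟩
  rw [le_div_iff₀ hβpos]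
  calc (m : ℝ) * β ≤ (m : ℝ) * b j := by
        exact mul_le_mul_of_nonneg_left (hβle j) (by positivity)
    _ ≤ c := hmc

private lemma ncard_ge {n : ℕ} (hn : 0 < n) {b : Fin n → ℝ} (hb : ∀ j, 0 < b j) {c : ℝ}
    (s : Fin n → ℕ) (h : ∀ j, (s j : ℝ) * b j ≤ c) :
    ∑ j, s j ≤ {p : ℕ × Fin n | 1 ≤ p.1 ∧ (p.1 : ℝ) * b p.2 ≤ c}.ncard := by
  rw [← pairSet_ncard s]
  apply Set.ncard_le_ncard _ (S_fin hn hb c)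
  rintro ⟨m, j⟩ ⟨h1, h2⟩
  refine ⟨h1, le_trans ?_ (h j)⟩
  exact mul_le_mul_of_nonneg_right (by exact_mod_cast h2) (hb j).le

private lemma ncard_le {n : ℕ} {b : Fin n → ℝ} {c : ℝ}
    (s : Fin n → ℕ) (h : ∀ m : ℕ, ∀ j, 1 ≤ m → (m : ℝ) * b j ≤ c → m ≤ s j) :
    {p : ℕ × Fin n | 1 ≤ p.1 ∧ (p.1 : ℝ) * b p.2 ≤ c}.ncard ≤ ∑ j, s j := by
  rw [← pairSet_ncard s]
  apply Set.ncard_le_ncard _ (pairSet_finite s)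
  rintro ⟨m, j⟩ ⟨h1, h2⟩
  exact ⟨h1, h m j h1 h2⟩

private lemma bddBelow_S {n k : ℕ} {b : Fin n → ℝ} (hb : ∀ j, 0 < b j) (hk : 1 ≤ k) :
    BddBelow {c : ℝ | k ≤ {p : ℕ × Fin n | 1 ≤ p.1 ∧ (p.1 : ℝ) * b p.2 ≤ c}.ncard} := by
  refine ⟨0, fun c hc => ?_⟩
  simp only [Set.mem_setOf_eq] at hc
  by_contra hlt
  push_neg at hlt
  have : {p : ℕ × Fin n | 1 ≤ p.1 ∧ (p.1 : ℝ) * b p.2 ≤ c} = ∅ := by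
    ext ⟨m, j⟩
    simp only [Set.mem_setOf_eq, Set.mem_empty_iff_false, iff_false, not_and, not_le]
    intro hm
    calc c < 0 := hlt
      _ < (m : ℝ) * b j := by
          have : (1:ℝ) ≤ (m:ℝ) := by exact_mod_cast hm
          nlinarith [hb j]
  rw [this, Set.ncard_empty] at hc
  omega


/-- `ckE a k` : the `k`-th smallest element (with multiplicity) of the multiset of all
positive integer multiples of the entries of `a`. -/
noncomputable def ckE {n : ℕ} (a : Fin n → ℝ) (k : ℕ) : ℝ :=
  sInf {c : ℝ | k ≤ {p : ℕ × Fin n | 1 ≤ p.1 ∧ (p.1 : ℝ) * a p.2 ≤ c}.ncard}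

/-- Conversely: if there are positive integers `r₁,…,rₙ` with `r₁a₁ = … = rₙaₙ` and
`k = r₁ + … + rₙ - n + 1`, then `a` is a local maximizer (on the positive orthant) of the
`k`-th ellipsoid capacity ratio. -/
theorem stmt4 (n k : ℕ) (hn : 1 ≤ n)
    (a : Fin n → ℝ) (hapos : ∀ i, 0 < a i)
    (r : Fin n → ℕ) (hrpos : ∀ i, 1 ≤ r i)
    (heq : ∀ i j : Fin n, (r i : ℝ) * a i = (r j : ℝ) * a j)
    (hk : k + n = (∑ i, r i) + 1) :
    IsLocalMaxOn (fun b : Fin n → ℝ => ckE b k / (∏ i, b i) ^ ((1:ℝ)/(n:ℝ)))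
      {b | ∀ i, 0 < b i} a := by
  have hn0 : 0 < n := hn
  set i0 : Fin n := ⟨0, hn0⟩ with hi0
  set T : ℝ := (r i0 : ℝ) * a i0 with hTdef
  have hT' : ∀ j, T = (r j : ℝ) * a j := fun j => heq i0 j
  have hTpos : 0 < T := by
    have := hrpos i0
    have := hapos i0
    have : (1:ℝ) ≤ (r i0 : ℝ) := by exact_mod_cast hrpos i0
    nlinarith [hapos i0]
  -- sums
  have hsumn : n ≤ ∑ i, r i := by
    calc n = ∑ _i : Fin n, 1 := by simp
      _ ≤ ∑ i, r i := Finset.sum_le_sum fun i _ => hrpos i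
  have hk1 : 1 ≤ k := by omega
  have hsub : ∑ j, (r j - 1) + n = ∑ j, r j := by
    have : ∑ j, (r j - 1 + 1) = ∑ j, r j :=
      Finset.sum_congr rfl fun j _ => Nat.sub_add_cancel (hrpos j)
    rw [Finset.sum_add_distrib] at this
    simpa using this
  -- geometric means
  have hPa : (0:ℝ) < (∏ i, a i) ^ ((1:ℝ)/(n:ℝ)) := by
    apply Real.rpow_pos_of_pos
    exact Finset.prod_pos fun i _ => hapos i
  -- Step 1: T ≤ ckE a k
  have hstep1 : T ≤ ckE a k := by
    apply le_csInf
    · refine ⟨T, ?_⟩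
      simp only [Set.mem_setOf_eq]
      refine le_trans (le_trans (by omega) (le_refl (∑ j, r j))) (ncard_ge hn0 hapos r ?_)
      intro j
      rw [← hT' j]
    · intro c hc
      simp only [Set.mem_setOf_eq] at hc
      by_contra hlt
      push_neg at hlt
      have hle : {p : ℕ × Fin n | 1 ≤ p.1 ∧ (p.1 : ℝ) * a p.2 ≤ c}.ncard ≤ ∑ j, (r j - 1) := by
        apply ncard_le
        intro m j hm hmc
        have hmr : (m : ℝ) < (r j : ℝ) := by
          have h1 : (m : ℝ) * a j < (r j : ℝ) * a j := lt_of_le_of_lt hmc (by rw [← hT' j]; exact hlt)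
          exact lt_of_mul_lt_mul_right h1 (hapos j).le
        have : m < r j := by exact_mod_cast hmr
        omega
      omega
  -- neighborhood parameters
  set R : ℕ := ∑ i, r i with hR
  have hR1 : 1 ≤ R := le_trans hn hsumn
  have hRpos : (0:ℝ) < (R:ℝ) := by exact_mod_cast hR1
  set ε : ℝ := 1 / (2 * (R:ℝ)) with hε
  have hεpos : 0 < ε := by positivity
  have hεhalf : ε ≤ 1/2 := by
    rw [hε]
    rw [div_le_div_iff₀ (by positivity) (by norm_num)]
    have hR1' : (1:ℝ) ≤ (R:ℝ) := by exact_mod_cast hR1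
    nlinarith
  have hε2R : ε * (2 * (R:ℝ)) = 1 := by
    rw [hε]; field_simp
  have hne : (Finset.univ : Finset (Fin n)).Nonempty := ⟨i0, Finset.mem_univ _⟩
  set α : ℝ := Finset.univ.inf' hne a with hα
  have hαpos : 0 < α := (Finset.lt_inf'_iff hne).mpr fun j _ => hapos j
  have hαle : ∀ j, α ≤ a j := fun j => Finset.inf'_le _ (Finset.mem_univ j)
  set δ : ℝ := ε * α with hδ
  have hδpos : 0 < δ := by positivity
  -- main
  show ∀ᶠ x in nhdsWithin a {b | ∀ i, 0 < b i},
    (fun b : Fin n → ℝ => ckE b k / (∏ i, b i) ^ ((1:ℝ)/(n:ℝ))) x ≤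
    (fun b : Fin n → ℝ => ckE b k / (∏ i, b i) ^ ((1:ℝ)/(n:ℝ))) a
  rw [Filter.eventually_iff, Metric.mem_nhdsWithin_iff]
  refine ⟨δ, hδpos, ?_⟩
  rintro b ⟨hball, hbpos⟩
  simp only [Set.mem_setOf_eq] at hbpos ⊢
  -- bounds on b j / a j
  have hdist : ∀ j, |b j - a j| < δ := by
    intro j
    have h1 := dist_le_pi_dist b a j
    have h2 : dist b a < δ := Metric.mem_ball.mp hball
    rw [Real.dist_eq] at h1
    linarith
  have hxub : ∀ j, b j / a j ≤ 1 + ε := by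
    intro j
    rw [div_le_iff₀ (hapos j)]
    have h1 := (abs_lt.mp (hdist j)).2
    have h2 : ε * α ≤ ε * a j := mul_le_mul_of_nonneg_left (hαle j) hεpos.le
    nlinarith
  have hxlb : ∀ j, 1 - ε ≤ b j / a j := by
    intro j
    rw [le_div_iff₀ (hapos j)]
    have h1 := (abs_lt.mp (hdist j)).1
    have h2 : ε * α ≤ ε * a j := mul_le_mul_of_nonneg_left (hαle j) hεpos.le
    nlinarith
  set G : ℝ := (∏ i, b i / a i) ^ ((1:ℝ)/(n:ℝ)) with hG
  have hprodpos : 0 < ∏ i, b i / a i :=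
    Finset.prod_pos fun i _ => div_pos (hbpos i) (hapos i)
  have hGpos : 0 < G := Real.rpow_pos_of_pos hprodpos _
  have hGge : 1 - ε ≤ G := by
    have h1 : (1 - ε) ^ n ≤ ∏ i, b i / a i := by
      calc (1 - ε) ^ n = ∏ _i : Fin n, (1 - ε) := by simp
        _ ≤ ∏ i, b i / a i :=
          Finset.prod_le_prod (fun i _ => by linarith) (fun i _ => hxlb i)
    calc 1 - ε = ((1 - ε) ^ n) ^ ((1:ℝ)/(n:ℝ)) := by
          rw [← Real.rpow_natCast (1 - ε) n, ← Real.rpow_mul (by linarith)]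
          rw [mul_one_div, div_self (by exact_mod_cast hn0.ne'), Real.rpow_one]
      _ ≤ G := Real.rpow_le_rpow (pow_nonneg (by linarith) n) h1 (by positivity)
  have hGn : G ^ n = ∏ i, b i / a i := by
    rw [hG, one_div, Real.rpow_inv_natCast_pow hprodpos.le hn0.ne']
  -- exists j0 with b j0 / a j0 ≤ G
  obtain ⟨j0, hj0⟩ : ∃ j0, b j0 / a j0 ≤ G := by
    by_contra hcon
    push_neg at hcon
    have h1 : ∏ _i : Fin n, G < ∏ i, b i / a i :=
      Finset.prod_lt_prod_of_nonempty (fun i _ => hGpos) (fun i _ => hcon i) hne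
    rw [Finset.prod_const, Finset.card_univ, Fintype.card_fin, hGn] at h1
    exact lt_irrefl _ h1
  set t : ℝ := T * G with ht
  -- key inequalities
  have hkey0 : (r j0 : ℝ) * b j0 ≤ t := by
    calc (r j0 : ℝ) * b j0 = ((r j0 : ℝ) * a j0) * (b j0 / a j0) := by
          rw [mul_assoc, mul_comm (a j0) (b j0 / a j0), div_mul_cancel₀ _ (hapos j0).ne']
      _ = T * (b j0 / a j0) := by rw [← hT' j0]
      _ ≤ T * G := mul_le_mul_of_nonneg_left hj0 hTpos.le
  have hkey : ∀ j, ((r j : ℝ) - 1) * b j ≤ t := by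
    intro j
    have hr1 : (1:ℝ) ≤ (r j : ℝ) := by exact_mod_cast hrpos j
    have hrR : (r j : ℝ) ≤ (R:ℝ) := by
      exact_mod_cast Finset.single_le_sum (fun i _ => Nat.zero_le (r i)) (Finset.mem_univ j)
    have hεr : ((r j : ℝ) - 1) * (1 + ε) ≤ (r j : ℝ) * (1 - ε) := by
      nlinarith [mul_le_mul_of_nonneg_left hrR hεpos.le]
    calc ((r j : ℝ) - 1) * b j = (((r j : ℝ) - 1) * (b j / a j)) * a j := by
          rw [mul_assoc, div_mul_cancel₀ _ (hapos j).ne']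
      _ ≤ (((r j : ℝ) - 1) * (1 + ε)) * a j := by
          apply mul_le_mul_of_nonneg_right _ (hapos j).le
          exact mul_le_mul_of_nonneg_left (hxub j) (by linarith)
      _ ≤ ((r j : ℝ) * (1 - ε)) * a j := mul_le_mul_of_nonneg_right hεr (hapos j).le
      _ ≤ ((r j : ℝ) * G) * a j := by
          apply mul_le_mul_of_nonneg_right _ (hapos j).le
          exact mul_le_mul_of_nonneg_left hGge (by linarith)
      _ = T * G := by rw [hT' j]; ring
  -- Step 2: ckE b k ≤ t
  have hstep2 : ckE b k ≤ t := by
    apply csInf_le (bddBelow_S hbpos hk1)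
    simp only [Set.mem_setOf_eq]
    set s : Fin n → ℕ := fun j => (r j - 1) + (if j = j0 then 1 else 0) with hs
    have hsum : ∑ j, s j = k := by
      rw [hs, Finset.sum_add_distrib]
      simp only [Finset.sum_ite_eq', Finset.mem_univ, if_true]
      omega
    rw [← hsum]
    apply ncard_ge hn0 hbpos s
    intro j
    by_cases hj : j = j0
    · have hsj : s j = r j := by
        have := hrpos j
        simp only [hs]
        rw [if_pos hj]
        omega
      rw [hsj, hj]
      exact hkey0
    · have : s j = r j - 1 := by simp [hs, hj]
      rw [this]
      have hc : ((r j - 1 : ℕ) : ℝ) = (r j : ℝ) - 1 := by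
        have := hrpos j
        push_cast [Nat.cast_sub this]
        ring
      rw [hc]
      exact hkey j
  -- conclude
  set Pb : ℝ := (∏ i, b i) ^ ((1:ℝ)/(n:ℝ)) with hPb
  have hPbpos : 0 < Pb := Real.rpow_pos_of_pos (Finset.prod_pos fun i _ => hbpos i) _
  have hGPb : G = Pb / (∏ i, a i) ^ ((1:ℝ)/(n:ℝ)) := by
    rw [hG, hPb, Finset.prod_div_distrib,
      Real.div_rpow (Finset.prod_nonneg fun i _ => (hbpos i).le)
        (Finset.prod_nonneg fun i _ => (hapos i).le)]
  calc ckE b k / Pb ≤ t / Pb := by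
        exact div_le_div_of_nonneg_right hstep2 hPbpos.le
    _ = T / (∏ i, a i) ^ ((1:ℝ)/(n:ℝ)) := by
        rw [ht, hGPb]
        field_simp [hPbpos.ne', hPa.ne']
    _ ≤ ckE a k / (∏ i, a i) ^ ((1:ℝ)/(n:ℝ)) := by
        exact div_le_div_of_nonneg_right hstep1 hPa.le
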